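/- Let A ∈ ℝ^{n×n}, let U : ℂ^{n×n} → ℂ^{n×n} be a ℂ-linear map such that U(Z) is Hermitian positive semi-definite whenever Z is Hermitian positive semi-definite, and define the ℂ-linear map Λ on ℂ^{n×n} by Λ(Z) := AZ + ZAᵀ + U(Z). Then for every t ≥ 0 and every Hermitian positive semi-definite Z_0 ∈ ℂ^{n×n}, the matrix exp(tΛ)(Z_0) − e^{tA} Z_0 e^{tAᵀ} is Hermitian positive semi-definite; in particular exp(tΛ)(Z_0) is Hermitian positive semi-definite. -/

import Mathlib

open Matrix
open scoped ComplexOrder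

attribute [local instance] Matrix.frobeniusNormedAddCommGroup Matrix.frobeniusNormedSpace
  Matrix.frobeniusNormedRing Matrix.frobeniusNormedAlgebra

instance matrixEndCLM_isTopologicalRing (n : ℕ) :
    IsTopologicalRing (Matrix (Fin n) (Fin n) ℂ →L[ℂ] Matrix (Fin n) (Fin n) ℂ) :=
  have h : ∀ (E : Type) [NormedAddCommGroup E] [NormedSpace ℂ E], IsTopologicalRing (E →L[ℂ] E) :=
    fun _ _ _ => inferInstance
  @h (Matrix (Fin n) (Fin n) ℂ) Matrix.normedAddCommGroup Matrix.normedSpace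

open NormedSpace Filter Asymptotics
open scoped Topology

set_option maxHeartbeats 1000000

section
variable {𝔸 : Type*} [NormedRing 𝔸] [NormedAlgebra ℂ 𝔸] [CompleteSpace 𝔸] [NormOneClass 𝔸]

lemma my_norm_exp_le (x : 𝔸) : ‖exp x‖ ≤ Real.exp ‖x‖ := by
  rw [NormedSpace.exp_eq_tsum (𝕂 := ℂ)]
  have h1 : ∀ n : ℕ, ‖(n.factorial⁻¹ : ℂ) • x ^ n‖ ≤ ‖x‖ ^ n / n.factorial := by
    intro n
    rw [norm_smul, norm_inv, Complex.norm_natCast, div_eq_inv_mul]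
    exact mul_le_mul_of_nonneg_left (norm_pow_le x n) (by positivity)
  exact (tsum_of_norm_bounded (Real.summable_pow_div_factorial ‖x‖).hasSum h1).trans_eq
    (by rw [Real.exp_eq_exp_ℝ, NormedSpace.exp_eq_tsum_div])

lemma my_pow_sub_pow (a b : 𝔸) {C : ℝ} (ha : ‖a‖ ≤ C) (hb : ‖b‖ ≤ C) :
    ∀ m : ℕ, ‖a ^ m - b ^ m‖ ≤ m * C ^ (m - 1) * ‖a - b‖ := by
  have hC : 0 ≤ C := (norm_nonneg a).trans ha
  intro m
  induction m with
  | zero => simp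
  | succ m ih =>
    have key : a ^ (m + 1) - b ^ (m + 1) = a * (a ^ m - b ^ m) + (a - b) * b ^ m := by
      rw [pow_succ', pow_succ']
      noncomm_ring
    rw [key]
    calc ‖a * (a ^ m - b ^ m) + (a - b) * b ^ m‖
        ≤ ‖a * (a ^ m - b ^ m)‖ + ‖(a - b) * b ^ m‖ := norm_add_le _ _
      _ ≤ ‖a‖ * ‖a ^ m - b ^ m‖ + ‖a - b‖ * ‖b ^ m‖ := by
          gcongr <;> exact norm_mul_le _ _
      _ ≤ C * (m * C ^ (m - 1) * ‖a - b‖) + ‖a - b‖ * C ^ m := by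
          gcongr
          exact (norm_pow_le b m).trans (by gcongr)
      _ ≤ (m + 1 : ℕ) * C ^ m * ‖a - b‖ := by
          rcases Nat.eq_zero_or_pos m with hm | hm
          · subst hm
            simp only [Nat.cast_zero, zero_mul, mul_zero, zero_add, pow_zero, Nat.cast_one]
            nlinarith [norm_nonneg (a - b)]
          · have : C * (m * C ^ (m - 1) * ‖a - b‖) = m * C ^ (m - 1 + 1) * ‖a - b‖ := by ring
            rw [this, Nat.sub_add_cancel hm]
            push_cast
            nlinarith [norm_nonneg (a - b), pow_nonneg hC m]
      _ = (m + 1 : ℕ) * C ^ (m + 1 - 1) * ‖a - b‖ := by simp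
end

section
variable {𝔸 : Type*} [NormedRing 𝔸] [NormedAlgebra ℂ 𝔸] [CompleteSpace 𝔸] [NormOneClass 𝔸]
open scoped Topology

lemma my_trotter (x y : 𝔸) :
    Tendsto (fun m : ℕ => (exp ((m : ℝ)⁻¹ • x) * exp ((m : ℝ)⁻¹ • y)) ^ m)
      atTop (𝓝 (exp (x + y))) := by
  have hee : (exp : 𝔸 → 𝔸) = exp := rfl
  set g : ℝ → 𝔸 := fun s => exp (s • x) * exp (s • y) - exp (s • (x + y)) with hgdef
  have hg0 : g 0 = 0 := by simp [hgdef, NormedSpace.exp_zero]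
  have hx : HasDerivAt (fun s : ℝ => exp (s • x)) x 0 := by
    rw [← hee]
    simpa using hasDerivAt_exp_smul_const (𝕂 := ℝ) x (0 : ℝ)
  have hy : HasDerivAt (fun s : ℝ => exp (s • y)) y 0 := by
    rw [← hee]
    simpa using hasDerivAt_exp_smul_const (𝕂 := ℝ) y (0 : ℝ)
  have hxy : HasDerivAt (fun s : ℝ => exp (s • (x + y))) (x + y) 0 := by
    rw [← hee]
    simpa using hasDerivAt_exp_smul_const (𝕂 := ℝ) (x + y) (0 : ℝ)
  have hg : HasDerivAt g 0 0 := by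
    exact ((hx.mul hy).sub hxy).congr_deriv (by simp [NormedSpace.exp_zero])
  have hlo : g =o[𝓝 (0:ℝ)] fun s => s := by
    have := hasDerivAt_iff_isLittleO.mp hg
    simpa [hg0] using this
  have hcomp : (fun m : ℕ => g ((m : ℝ)⁻¹)) =o[atTop] fun m : ℕ => ((m : ℝ)⁻¹) :=
    hlo.comp_tendsto tendsto_inv_atTop_nhds_zero_nat
  set r : ℝ := ‖x‖ + ‖y‖ with hrdef
  have hr : 0 ≤ r := by positivity
  -- the multiplied error tends to zero
  have hkey : Tendsto (fun m : ℕ => (m : ℝ) * Real.exp r * ‖g ((m : ℝ)⁻¹)‖) atTop (𝓝 0) := by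
    rw [NormedAddCommGroup.tendsto_nhds_zero]
    intro ε hε
    have hc : 0 < ε / (2 * Real.exp r) := by positivity
    filter_upwards [isLittleO_iff.mp hcomp hc, eventually_ge_atTop 1] with m hm hm1
    have hm0 : (0:ℝ) < m := by exact_mod_cast hm1
    have : (m : ℝ) * Real.exp r * ‖g ((m : ℝ)⁻¹)‖ ≤ ε / 2 := by
      calc (m : ℝ) * Real.exp r * ‖g ((m : ℝ)⁻¹)‖
          ≤ (m : ℝ) * Real.exp r * (ε / (2 * Real.exp r) * ‖((m:ℝ)⁻¹)‖) := by
            gcongr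
        _ = (m : ℝ) * (m : ℝ)⁻¹ * (Real.exp r * (ε / (2 * Real.exp r))) := by
            rw [Real.norm_eq_abs, abs_of_pos (by positivity)]; ring
        _ = ε / 2 := by
            rw [mul_inv_cancel₀ hm0.ne', one_mul]
            field_simp
    have hnn : 0 ≤ (m : ℝ) * Real.exp r * ‖g ((m : ℝ)⁻¹)‖ := by positivity
    rw [Real.norm_eq_abs, abs_of_nonneg hnn]
    linarith
  rw [tendsto_iff_norm_sub_tendsto_zero]
  apply squeeze_zero_norm' _ hkey
  filter_upwards [eventually_ge_atTop 1] with m hm1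
  have hm0 : (0:ℝ) < m := by exact_mod_cast hm1
  set a : 𝔸 := exp ((m : ℝ)⁻¹ • x) * exp ((m : ℝ)⁻¹ • y)
  set b : 𝔸 := exp ((m : ℝ)⁻¹ • (x + y))
  have hb : b ^ m = exp (x + y) := by
    letI : NormedAlgebra ℚ 𝔸 := .restrictScalars ℚ ℂ 𝔸
    rw [← NormedSpace.exp_nsmul, ← Nat.cast_smul_eq_nsmul ℝ, smul_smul, mul_inv_cancel₀ hm0.ne', one_smul]
  set C : ℝ := Real.exp ((m : ℝ)⁻¹ * r) with hCdef
  have hC1 : 1 ≤ C := Real.one_le_exp (by positivity)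
  have ha' : ‖a‖ ≤ C := by
    calc ‖a‖ ≤ ‖exp ((m : ℝ)⁻¹ • x)‖ * ‖exp ((m : ℝ)⁻¹ • y)‖ := norm_mul_le _ _
      _ ≤ Real.exp ‖(m : ℝ)⁻¹ • x‖ * Real.exp ‖(m : ℝ)⁻¹ • y‖ :=
          mul_le_mul (my_norm_exp_le _) (my_norm_exp_le _) (norm_nonneg _) (Real.exp_pos _).le
      _ = C := by
          rw [← Real.exp_add, hCdef, norm_smul, norm_smul, Real.norm_eq_abs,
            abs_of_pos (by positivity)]
          rw [hrdef]; ring_nf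
  have hb' : ‖b‖ ≤ C := by
    calc ‖b‖ ≤ Real.exp ‖(m : ℝ)⁻¹ • (x + y)‖ := my_norm_exp_le _
      _ ≤ C := by
          rw [hCdef, Real.exp_le_exp, norm_smul, Real.norm_eq_abs, abs_of_pos (by positivity)]
          exact mul_le_mul_of_nonneg_left (norm_add_le _ _) (by positivity)
  have hCm : C ^ m = Real.exp r := by
    rw [hCdef, ← Real.exp_nat_mul]
    congr 1
    field_simp
  calc ‖‖a ^ m - exp (x + y)‖‖ = ‖a ^ m - b ^ m‖ := by rw [norm_norm, hb]
    _ ≤ m * C ^ (m - 1) * ‖a - b‖ := my_pow_sub_pow a b ha' hb' m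
    _ ≤ m * C ^ m * ‖a - b‖ :=
        mul_le_mul_of_nonneg_right
          (mul_le_mul_of_nonneg_left (pow_le_pow_right₀ hC1 (Nat.sub_le m 1)) (by positivity))
          (norm_nonneg _)
    _ = (m : ℝ) * Real.exp r * ‖g ((m : ℝ)⁻¹)‖ := by rw [hCm]
end

section GenCLM
variable {E : Type*} [NormedAddCommGroup E] [NormedSpace ℂ E] [FiniteDimensional ℂ E]

lemma gen_exp_series (T : E →L[ℂ] E) :
    HasSum (fun k : ℕ => ((k.factorial : ℂ)⁻¹) • T ^ k) (exp T) := by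
  haveI := FiniteDimensional.complete ℂ E
  exact NormedSpace.exp_series_hasSum_exp' T

lemma gen_exp_add {S T : E →L[ℂ] E} (h : Commute S T) : exp (S + T) = exp S * exp T := by
  haveI := FiniteDimensional.complete ℂ E
  letI : NormedAlgebra ℚ (E →L[ℂ] E) := .restrictScalars ℚ ℂ _
  exact NormedSpace.exp_add_of_commute h

lemma gen_exp_nsmul (k : ℕ) (T : E →L[ℂ] E) : exp (k • T) = exp T ^ k := by
  haveI := FiniteDimensional.complete ℂ E
  letI : NormedAlgebra ℚ (E →L[ℂ] E) := .restrictScalars ℚ ℂ _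
  exact NormedSpace.exp_nsmul k T

lemma gen_trotter [Nontrivial E] (x y : E →L[ℂ] E) :
    Tendsto (fun m : ℕ => (exp ((m : ℝ)⁻¹ • x) * exp ((m : ℝ)⁻¹ • y)) ^ m)
      atTop (𝓝 (exp (x + y))) := by
  haveI := FiniteDimensional.complete ℂ E
  exact my_trotter x y
end GenCLM

section MatrixAux

variable {n : ℕ}
local notation "M" => Matrix (Fin n) (Fin n) ℂ

noncomputable def matL (B : M) : M →L[ℂ] M := ContinuousLinearMap.mul ℂ M B

noncomputable def matR (C : M) : M →L[ℂ] M := (ContinuousLinearMap.mul ℂ M).flip C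

@[simp]
lemma matL_apply (B Z : M) : matL B Z = B * Z := rfl

@[simp]
lemma matR_apply (C Z : M) : matR C Z = Z * C := rfl


lemma my_psd_smul {Z : M} (hZ : Z.PosSemidef) {c : ℝ} (hc : 0 ≤ c) :
    ((c : ℂ) • Z).PosSemidef := by
  rw [Matrix.posSemidef_iff_dotProduct_mulVec]
  constructor
  · have h := hZ.1
    rw [Matrix.IsHermitian, conjTranspose_smul, h, Complex.star_def, Complex.conj_ofReal]
  · intro x
    rw [smul_mulVec, dotProduct_smul]
    exact mul_nonneg (by exact_mod_cast hc) (hZ.dotProduct_mulVec_nonneg x)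

lemma my_real_smul_eq (r : ℝ) (W : M) : r • W = (r : ℂ) • W := by
  ext i j
  simp [Matrix.smul_apply, Complex.real_smul]

lemma my_psd_sum {f : ℕ → M} (h : ∀ i, (f i).PosSemidef) (k : ℕ) :
    (∑ i ∈ Finset.range k, f i).PosSemidef := by
  induction k with
  | zero => simpa using Matrix.PosSemidef.zero
  | succ k ih => rw [Finset.sum_range_succ]; exact ih.add (h k)

lemma my_psd_of_tendsto {f : ℕ → M} {Y : M}
    (hf : Tendsto f atTop (𝓝 Y)) (h : ∀ᶠ m in atTop, (f m).PosSemidef) : Y.PosSemidef := by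
  haveI : FiniteDimensional ℝ M := by infer_instance
  rw [Matrix.posSemidef_iff_dotProduct_mulVec]
  constructor
  · let L : M →ₗ[ℝ] M :=
      { toFun := fun Z => Zᴴ
        map_add' := fun a b => conjTranspose_add a b
        map_smul' := fun r a => by
          ext i j
          simp [conjTranspose_apply, Matrix.smul_apply, Complex.real_smul] }
    have hLc : Continuous L := L.continuous_of_finiteDimensional
    have h1 : Tendsto (fun m => (f m)ᴴ) atTop (𝓝 Yᴴ) := (hLc.tendsto Y).comp hf
    have h2 : Tendsto f atTop (𝓝 Yᴴ) :=
      h1.congr' (by filter_upwards [h] with m hm; exact hm.1)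
    exact tendsto_nhds_unique h2 hf
  · intro x
    let ℓ : M →ₗ[ℂ] ℂ :=
      { toFun := fun Z => star x ⬝ᵥ (Z *ᵥ x)
        map_add' := fun a b => by simp [add_mulVec, dotProduct_add]
        map_smul' := fun c a => by simp [smul_mulVec, dotProduct_smul] }
    have hc : Continuous ℓ := ℓ.continuous_of_finiteDimensional
    have h3 : Tendsto (fun m => ℓ (f m)) atTop (𝓝 (ℓ Y)) := (hc.tendsto Y).comp hf
    have hcl : IsClosed {z : ℂ | 0 ≤ z} := by
      have : {z : ℂ | 0 ≤ z} = {z : ℂ | 0 ≤ z.re} ∩ {z : ℂ | z.im = 0} := by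
        ext z
        simp only [Set.mem_setOf_eq, Set.mem_inter_iff]
        rw [Complex.le_def]
        simp [eq_comm]
      rw [this]
      exact (isClosed_le continuous_const Complex.continuous_re).inter
        (isClosed_eq Complex.continuous_im continuous_const)
    exact hcl.mem_of_tendsto h3 (by filter_upwards [h] with m hm; exact hm.dotProduct_mulVec_nonneg x)

lemma my_hasSum_exp_apply (T : M →L[ℂ] M) (Z : M) :
    HasSum (fun k : ℕ => ((k.factorial : ℂ)⁻¹) • ((T ^ k) Z)) (exp T Z) := by
  have h := @gen_exp_series M Matrix.normedAddCommGroup Matrix.normedSpace _ T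
  have h2 := (ContinuousLinearMap.apply ℂ M Z).hasSum h
  simp only [map_smul, ContinuousLinearMap.apply_apply] at h2
  exact h2

lemma my_pow_apply_mulLeft (B : M) : ∀ (k : ℕ) (Z : M),
    ((matL B) ^ k) Z = B ^ k * Z := by
  intro k
  induction k with
  | zero => intro Z; simp
  | succ k ih =>
    intro Z
    rw [pow_succ, ContinuousLinearMap.mul_apply, matL_apply, ih (B * Z),
      ← mul_assoc, ← pow_succ]

lemma my_pow_apply_mulRight (C : M) : ∀ (k : ℕ) (Z : M),
    ((matR C) ^ k) Z = Z * C ^ k := by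
  intro k
  induction k with
  | zero => intro Z; simp
  | succ k ih =>
    intro Z
    rw [pow_succ, ContinuousLinearMap.mul_apply]
    simp only [matR_apply]
    rw [ih (Z * C), mul_assoc, ← pow_succ']

lemma my_exp_lyap_apply (B C Z : M) :
    exp (matL B + matR C) Z
      = exp B * Z * exp C := by
  have hcomm : Commute (matL B)
      (matR C) := by
    ext W
    simp [ContinuousLinearMap.mul_apply, mul_assoc]
  have hadd : exp (matL B + matR C)
      = exp (matL B) * exp (matR C) := by
    exact @gen_exp_add M Matrix.normedAddCommGroup Matrix.normedSpace _ _ _ hcomm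
  rw [hadd, ContinuousLinearMap.mul_apply]
  have h1 : exp (matR C) Z = Z * exp C := by
    have ha := my_hasSum_exp_apply (matR C) Z
    simp only [my_pow_apply_mulRight] at ha
    have hb := (ContinuousLinearMap.mul ℂ M Z).hasSum (NormedSpace.exp_series_hasSum_exp' (𝕂 := ℂ) C)
    simp only [_root_.map_smul, ContinuousLinearMap.mul_apply'] at hb
    exact ha.unique hb
  have h2 : ∀ W : M, exp (matL B) W = exp B * W := by
    intro W
    have ha := my_hasSum_exp_apply (matL B) W
    simp only [my_pow_apply_mulLeft] at ha
    have hb := ((ContinuousLinearMap.mul ℂ M).flip W).hasSum (NormedSpace.exp_series_hasSum_exp' (𝕂 := ℂ) B)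
    simp only [ContinuousLinearMap.map_smul, ContinuousLinearMap.coe_smul', Pi.smul_apply,
      ContinuousLinearMap.flip_apply, ContinuousLinearMap.mul_apply'] at hb
    exact ha.unique hb
  rw [h1, h2, mul_assoc]

lemma my_Upow_psd {U : M →L[ℂ] M} (hU : ∀ Z : M, Z.PosSemidef → (U Z).PosSemidef) :
    ∀ (k : ℕ) (Z : M), Z.PosSemidef → ((U ^ k) Z).PosSemidef := by
  intro k
  induction k with
  | zero => intro Z hZ; simpa using hZ
  | succ k ih =>
    intro Z hZ
    rw [pow_succ, ContinuousLinearMap.mul_apply]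
    exact ih _ (hU _ hZ)

lemma my_smul_pow_apply (s : ℝ) (U : M →L[ℂ] M) :
    ∀ (k : ℕ) (Z : M), ((s • U) ^ k) Z = s ^ k • ((U ^ k) Z) := by
  intro k
  induction k with
  | zero => intro Z; simp
  | succ k ih =>
    intro Z
    calc ((s • U) ^ (k + 1)) Z = ((s • U) ^ k) ((s • U) Z) := by
          rw [pow_succ, ContinuousLinearMap.mul_apply]
      _ = s ^ k • ((U ^ k) (s • U Z)) := by rw [ih, ContinuousLinearMap.smul_apply]
      _ = s ^ (k + 1) • ((U ^ (k + 1)) Z) := by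
          rw [ContinuousLinearMap.map_smul_of_tower, smul_smul, pow_succ s, pow_succ U,
            ContinuousLinearMap.mul_apply]

lemma my_exp_U_psd {U : M →L[ℂ] M} (hU : ∀ Z : M, Z.PosSemidef → (U Z).PosSemidef)
    {s : ℝ} (hs : 0 ≤ s) {Z : M} (hZ : Z.PosSemidef) :
    (exp (s • U) Z).PosSemidef ∧ (exp (s • U) Z - Z).PosSemidef := by
  set f : ℕ → M := fun k => ((k.factorial : ℂ)⁻¹) • (((s • U) ^ k) Z) with hfdef
  have hsum : HasSum f (exp (s • U) Z) := my_hasSum_exp_apply (s • U) Z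
  have hfpsd : ∀ k, (f k).PosSemidef := by
    intro k
    have h1 : ((s • U) ^ k) Z = ((s ^ k : ℝ) : ℂ) • ((U ^ k) Z) := by
      rw [my_smul_pow_apply, my_real_smul_eq]
    rw [hfdef]
    simp only [h1]
    have h2 : (((s ^ k : ℝ) : ℂ) • ((U ^ k) Z)).PosSemidef :=
      my_psd_smul (my_Upow_psd hU k Z hZ) (pow_nonneg hs k)
    have h3 : ((k.factorial : ℂ)⁻¹) = (((k.factorial : ℝ)⁻¹ : ℝ) : ℂ) := by push_cast; ring
    rw [h3]
    exact my_psd_smul h2 (by positivity)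
  have hf0 : f 0 = Z := by simp [hfdef]
  constructor
  · exact my_psd_of_tendsto hsum.tendsto_sum_nat
      (Eventually.of_forall fun k => my_psd_sum hfpsd k)
  · have h4 : Tendsto (fun k => (∑ i ∈ Finset.range (k + 1), f i) - Z) atTop
        (𝓝 (exp (s • U) Z - Z)) :=
      (hsum.tendsto_sum_nat.comp (tendsto_add_atTop_nat 1)).sub_const Z
    refine my_psd_of_tendsto h4 (Eventually.of_forall fun k => ?_)
    have h5 : (∑ i ∈ Finset.range (k + 1), f i) - Z = ∑ i ∈ Finset.range k, f (i + 1) := by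
      rw [Finset.sum_range_succ', hf0]
      abel
    rw [h5]
    exact my_psd_sum (fun i => hfpsd (i + 1)) k

lemma my_pow_compare {Q E : M →L[ℂ] M}
    (hQ : ∀ Z : M, Z.PosSemidef → (Q Z).PosSemidef)
    (hE : ∀ Z : M, Z.PosSemidef → (E Z).PosSemidef)
    (hQE : ∀ Z : M, Z.PosSemidef → (Q Z - E Z).PosSemidef) :
    ∀ (m : ℕ) (Z : M), Z.PosSemidef →
      ((Q ^ m) Z - (E ^ m) Z).PosSemidef ∧ ((E ^ m) Z).PosSemidef := by
  intro m
  induction m with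
  | zero => intro Z hZ; exact ⟨by simpa using Matrix.PosSemidef.zero, by simpa using hZ⟩
  | succ m ih =>
    intro Z hZ
    obtain ⟨h1, h2⟩ := ih Z hZ
    have hQm : ((Q ^ m) Z).PosSemidef := by
      have := h1.add h2
      simpa using this
    constructor
    · have key : (Q ^ (m + 1)) Z - (E ^ (m + 1)) Z
          = Q ((Q ^ m) Z - (E ^ m) Z) + (Q ((E ^ m) Z) - E ((E ^ m) Z)) := by
        rw [pow_succ', pow_succ', ContinuousLinearMap.mul_apply,
          ContinuousLinearMap.mul_apply, map_sub]
        abel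
      rw [key]
      exact (hQ _ h1).add (hQE _ h2)
    · rw [pow_succ', ContinuousLinearMap.mul_apply]
      exact hE _ h2

end MatrixAux

/-- **Positivity comparison for the flow of `Λ` (equation (Pikksol), proof of Theorem 4.2).**
For `Λ(Z) = A Z + Z Aᵀ + U(Z)` with `U` positivity-preserving, the flow `exp(tΛ)` dominates
the flow `Z₀ ↦ e^{tA} Z₀ e^{tAᵀ}` of the Lyapunov part: for `t ≥ 0` and `Z₀` Hermitian
positive semi-definite, `exp(tΛ)(Z₀) - e^{tA} Z₀ e^{tAᵀ}` is Hermitian positive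
semi-definite; in particular so is `exp(tΛ)(Z₀)`. -/
theorem expLambda_dominates_lyapunov_flow
    {n : ℕ} (A : Matrix (Fin n) (Fin n) ℝ)
    (U Λ : Matrix (Fin n) (Fin n) ℂ →L[ℂ] Matrix (Fin n) (Fin n) ℂ)
    (hU : ∀ Z : Matrix (Fin n) (Fin n) ℂ, Z.PosSemidef → (U Z).PosSemidef)
    (hΛ : ∀ Z : Matrix (Fin n) (Fin n) ℂ,
      Λ Z = A.map Complex.ofReal * Z + Z * (A.map Complex.ofReal)ᵀ + U Z)
    (t : ℝ) (ht : 0 ≤ t)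
    (Z₀ : Matrix (Fin n) (Fin n) ℂ) (hZ₀ : Z₀.PosSemidef) :
    (NormedSpace.exp (t • Λ) Z₀
      - NormedSpace.exp (t • A.map Complex.ofReal) * Z₀
        * NormedSpace.exp (t • (A.map Complex.ofReal)ᵀ)).PosSemidef
    ∧ (NormedSpace.exp (t • Λ) Z₀).PosSemidef := by
  rcases Nat.eq_zero_or_pos n with hn0 | hn
  · subst hn0
    have hpsd : ∀ W : Matrix (Fin 0) (Fin 0) ℂ, W.PosSemidef := by
      intro W
      rw [Matrix.posSemidef_iff_dotProduct_mulVec]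
      constructor
      · ext i j; exact i.elim0
      · intro x; simp [dotProduct]
    exact ⟨hpsd _, hpsd _⟩
  haveI : Nonempty (Fin n) := ⟨⟨0, hn⟩⟩
  haveI : Nontrivial (Matrix (Fin n) (Fin n) ℂ) := by infer_instance
  set MA : (Matrix (Fin n) (Fin n) ℂ) := A.map Complex.ofReal with hMA
  set Φ : (Matrix (Fin n) (Fin n) ℂ) →L[ℂ] (Matrix (Fin n) (Fin n) ℂ) := matL MA
      + matR MAᵀ with hΦ
  have hΛΦ : Λ = Φ + U := by
    ext Z
    simp only [ContinuousLinearMap.add_apply, hΦ, matL_apply,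
      matR_apply, hΛ Z]
  -- star facts
  have hstar : ∀ s : ℝ, star (s • MA) = s • MAᵀ := by
    intro s
    ext i j
    simp [Matrix.star_apply, Matrix.smul_apply, hMA, Matrix.map_apply, Matrix.transpose_apply,
      Complex.real_smul, Complex.conj_ofReal]
  have hMAH : ∀ s : ℝ, (exp (s • MA))ᴴ = exp (s • MAᵀ) := by
    intro s
    rw [← Matrix.star_eq_conjTranspose, NormedSpace.star_exp, hstar s]
  -- action of exp (s • Φ)
  have hsΦ : ∀ s : ℝ, s • Φ = matL (s • MA)
      + matR (s • MAᵀ) := by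
    intro s
    ext W
    simp only [ContinuousLinearMap.smul_apply, ContinuousLinearMap.add_apply,
      matL_apply, matR_apply, hΦ,
      smul_add, smul_mul_assoc, mul_smul_comm]
  have hEact : ∀ (s : ℝ) (W : Matrix (Fin n) (Fin n) ℂ), exp (s • Φ) W = exp (s • MA) * W * exp (s • MAᵀ) := by
    intro s W
    rw [hsΦ s, my_exp_lyap_apply]
  have hEpsd : ∀ (s : ℝ) (W : Matrix (Fin n) (Fin n) ℂ), W.PosSemidef → (exp (s • Φ) W).PosSemidef := by
    intro s W hW
    rw [hEact, ← hMAH s]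
    exact hW.mul_mul_conjTranspose_same _
  -- Trotter
  have htr := @gen_trotter (Matrix (Fin n) (Fin n) ℂ) Matrix.normedAddCommGroup Matrix.normedSpace _ _ (t • Φ) (t • U)
  have hev : Tendsto
      (fun m : ℕ => ((exp ((m:ℝ)⁻¹ • (t • Φ)) * exp ((m:ℝ)⁻¹ • (t • U))) ^ m) Z₀)
      atTop (𝓝 (exp (t • Λ) Z₀)) := by
    have h2 : Tendsto (fun T : (Matrix (Fin n) (Fin n) ℂ) →L[ℂ] (Matrix (Fin n) (Fin n) ℂ) => T Z₀) (𝓝 (exp (t • Φ + t • U)))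
        (𝓝 (exp (t • Φ + t • U) Z₀)) :=
      ((ContinuousLinearMap.apply ℂ (Matrix (Fin n) (Fin n) ℂ) Z₀).continuous.tendsto _)
    have h3 := h2.comp htr
    have h4 : t • Λ = t • Φ + t • U := by rw [hΛΦ, smul_add]
    rw [h4]
    exact h3
  have hdiff : Tendsto
      (fun m : ℕ => ((exp ((m:ℝ)⁻¹ • (t • Φ)) * exp ((m:ℝ)⁻¹ • (t • U))) ^ m) Z₀
        - exp (t • MA) * Z₀ * exp (t • MAᵀ))
      atTop (𝓝 (exp (t • Λ) Z₀ - exp (t • MA) * Z₀ * exp (t • MAᵀ))) :=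
    hev.sub_const _
  have hPSD1 : (exp (t • Λ) Z₀ - exp (t • MA) * Z₀ * exp (t • MAᵀ)).PosSemidef := by
    refine my_psd_of_tendsto hdiff ?_
    filter_upwards [eventually_ge_atTop 1] with m hm1
    have hm0 : (0:ℝ) < m := by exact_mod_cast hm1
    set s : ℝ := (m:ℝ)⁻¹ * t with hsdef
    have hs : 0 ≤ s := by positivity
    have hsm1 : (m:ℝ)⁻¹ • (t • Φ) = s • Φ := by rw [smul_smul]
    have hsm2 : (m:ℝ)⁻¹ • (t • U) = s • U := by rw [smul_smul]
    rw [hsm1, hsm2]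
    set Q : (Matrix (Fin n) (Fin n) ℂ) →L[ℂ] (Matrix (Fin n) (Fin n) ℂ) := exp (s • Φ) * exp (s • U) with hQdef
    set E : (Matrix (Fin n) (Fin n) ℂ) →L[ℂ] (Matrix (Fin n) (Fin n) ℂ) := exp (s • Φ) with hEdef
    have hQpsd : ∀ W : Matrix (Fin n) (Fin n) ℂ, W.PosSemidef → (Q W).PosSemidef := by
      intro W hW
      rw [hQdef, ContinuousLinearMap.mul_apply]
      exact hEpsd s _ (my_exp_U_psd hU hs hW).1
    have hQE : ∀ W : Matrix (Fin n) (Fin n) ℂ, W.PosSemidef → (Q W - E W).PosSemidef := by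
      intro W hW
      have : Q W - E W = E (exp (s • U) W - W) := by
        rw [hQdef, hEdef, ContinuousLinearMap.mul_apply, map_sub]
      rw [this]
      exact hEpsd s _ (my_exp_U_psd hU hs hW).2
    have hcmp := (my_pow_compare hQpsd (fun W hW => hEpsd s W hW) hQE m Z₀ hZ₀).1
    have hEm : (E ^ m) Z₀ = exp (t • MA) * Z₀ * exp (t • MAᵀ) := by
      have h5 : (E : (Matrix (Fin n) (Fin n) ℂ) →L[ℂ] (Matrix (Fin n) (Fin n) ℂ)) ^ m = exp (t • Φ) := by
        have hnsm : exp (m • (s • Φ)) = exp (s • Φ) ^ m :=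
          @gen_exp_nsmul (Matrix (Fin n) (Fin n) ℂ) Matrix.normedAddCommGroup Matrix.normedSpace _ m (s • Φ)
        rw [hEdef, ← hnsm, ← Nat.cast_smul_eq_nsmul ℝ, smul_smul, hsdef,
          ← mul_assoc, mul_inv_cancel₀ hm0.ne', one_mul]
      rw [h5, hEact]
    rw [← hEm]
    exact hcmp
  refine ⟨hPSD1, ?_⟩
  have hlyap : (exp (t • MA) * Z₀ * exp (t • MAᵀ)).PosSemidef := by
    rw [← hMAH t]
    exact hZ₀.mul_mul_conjTranspose_same _
  have := hPSD1.add hlyap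
  simpa using this
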